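/- Let G = (V, ∼) be a graph with vertex valence bounded by d₀ ≥ 1. For every Q > 1 and s > 0 there exists C = C(d₀, s, Q) such that: if A, B, A', B' ⊂ V with A' contained in the s-neighborhood N_s(A) and B' ⊂ N_s(B) (with respect to the combinatorial metric), then mod_Q(A',B') ≤ C · mod_Q(A,B). -/

import Mathlib

open scoped ENNReal

/-- A weight `w` is admissible for the pair `(A,B)` in the graph `G` if it sums to at least
`1` along every chain connecting `A` to `B` (consecutive vertices adjacent or equal). -/
def GraphAdmissible {V : Type*} (G : SimpleGraph V) (A B : Set V) (w : V → ℝ≥0∞) : Prop :=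
  ∀ (n : ℕ) (x : Fin (n + 1) → V),
    (∀ i : Fin n, G.Adj (x i.castSucc) (x i.succ) ∨ x i.castSucc = x i.succ) →
    x 0 ∈ A → x (Fin.last n) ∈ B → 1 ≤ ∑ i, w (x i)

/-- The combinatorial `Q`-modulus `mod_Q(A,B)` of a pair of vertex sets in a graph. -/
noncomputable def gmodQ {V : Type*} (G : SimpleGraph V) (Q : ℝ) (A B : Set V) : ℝ≥0∞ :=
  ⨅ (w : V → ℝ≥0∞) (_ : GraphAdmissible G A B w), ∑' v, w v ^ Q

/-- The `s`-neighborhood of a vertex set `A` in the combinatorial metric of `G`. -/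
def graphNbhd {V : Type*} (G : SimpleGraph V) (s : ℝ) (A : Set V) : Set V :=
  {u | ∃ a ∈ A, G.Reachable u a ∧ ((G.dist u a : ℝ) < s)}

namespace Stmt9Aux

open SimpleGraph

variable {V : Type} {G : SimpleGraph V}

/-- The ball of radius `k` around `v`: vertices with a walk to `v` of length at most `k`. -/
def gball (G : SimpleGraph V) (k : ℕ) (v : V) : Set V := {u | ∃ p : G.Walk u v, p.length ≤ k}

lemma self_mem_gball (k : ℕ) (v : V) : v ∈ gball G k v := ⟨Walk.nil, by simp⟩

lemma mem_gball_comm {k : ℕ} {u v : V} : u ∈ gball G k v ↔ v ∈ gball G k u := by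
  constructor <;> rintro ⟨p, hp⟩ <;> exact ⟨p.reverse, by simpa using hp⟩

lemma gball_bound {d0 : ℕ} (hfin : ∀ v, (G.neighborSet v).Finite)
    (hd : ∀ v, (G.neighborSet v).ncard ≤ d0) (k : ℕ) (v : V) :
    ∃ F : Finset V, gball G k v ⊆ ↑F ∧ F.card ≤ (d0 + 1) ^ k := by
  classical
  induction k with
  | zero =>
    refine ⟨{v}, ?_, by simp⟩
    rintro u ⟨p, hp⟩
    have := Walk.eq_of_length_eq_zero (Nat.le_zero.mp hp)
    simp [this]
  | succ k ih =>
    obtain ⟨F, hF, hFcard⟩ := ih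
    refine ⟨F.biUnion (fun x => insert x (hfin x).toFinset), ?_, ?_⟩
    · rintro u ⟨p, hp⟩
      cases p with
      | nil =>
        have hv : v ∈ F := hF (self_mem_gball k v)
        exact Finset.mem_coe.mpr (Finset.mem_biUnion.mpr ⟨v, hv, Finset.mem_insert_self _ _⟩)
      | @cons _ c _ h q =>
        have hc : c ∈ F := hF ⟨q, by simpa using Nat.lt_succ_iff.mp (Nat.lt_of_lt_of_le (Nat.lt_succ_of_le le_rfl) (by simpa using hp))⟩
        refine Finset.mem_coe.mpr (Finset.mem_biUnion.mpr ⟨c, hc, Finset.mem_insert.mpr (Or.inr ?_)⟩)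
        exact (hfin c).mem_toFinset.mpr h.symm
    · refine le_trans Finset.card_biUnion_le ?_
      refine le_trans (Finset.sum_le_card_nsmul F _ (d0 + 1) ?_) ?_
      · intro x _
        refine le_trans (Finset.card_insert_le _ _) ?_
        have : (hfin x).toFinset.card ≤ d0 := by
          rw [← Set.ncard_eq_toFinset_card _ (hfin x)]; exact hd x
        omega
      · rw [smul_eq_mul, pow_succ]
        exact Nat.mul_le_mul_right _ hFcard

lemma one_le_sum_list {A B : Set V} {w : V → ℝ≥0∞} (hw : GraphAdmissible G A B w)
    (l : List V) (hl : l ≠ []) (hc : l.Chain' (fun x y => G.Adj x y ∨ x = y))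
    (hA : l.head hl ∈ A) (hB : l.getLast hl ∈ B) : 1 ≤ (l.map w).sum := by
  obtain ⟨n, hn⟩ : ∃ n, l.length = n + 1 :=
    ⟨l.length - 1, (Nat.succ_pred_eq_of_pos (List.length_pos_iff.mpr hl)).symm⟩
  set x : Fin (n + 1) → V := fun i => l.get (Fin.cast hn.symm i) with hx
  have hlofn : l = List.ofFn x := by
    refine List.ext_get (by simp [hn]) ?_
    intro i h1 h2
    rw [List.get_ofFn]
    rfl
  have key := hw n x ?_ ?_ ?_
  · rw [hlofn, List.map_ofFn, List.sum_ofFn]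
    exact key
  · intro i
    have h' : (i : ℕ) < l.length - 1 := by omega
    have := List.isChain_iff_getElem.mp hc i (by omega)
    exact this
  · have : x 0 = l.head hl := by
      rw [List.head_eq_getElem_zero hl]
      simp [hx]
    rw [this]; exact hA
  · have : x (Fin.last n) = l.getLast hl := by
      rw [List.getLast_eq_getElem]
      simp [hx, hn]
    rw [this]; exact hB

lemma chain_to_walk (n : ℕ) : ∀ (x : Fin (n + 1) → V),
    (∀ i : Fin n, G.Adj (x i.castSucc) (x i.succ) ∨ x i.castSucc = x i.succ) →
    ∃ p : G.Walk (x 0) (x (Fin.last n)), ∀ y ∈ p.support, ∃ i, y = x i := by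
  induction n with
  | zero =>
    intro x _
    refine ⟨Walk.nil.copy rfl (congrArg x (Fin.ext (by simp) : (0 : Fin (0+1)) = Fin.last 0)), ?_⟩
    intro y hy
    simp only [Walk.support_copy, Walk.support_nil, List.mem_singleton] at hy
    exact ⟨0, hy⟩
  | succ n ih =>
    intro x hx
    set x' : Fin (n + 1) → V := fun i => x i.succ with hx'
    have hstep : ∀ i : Fin n, G.Adj (x' i.castSucc) (x' i.succ) ∨ x' i.castSucc = x' i.succ := by
      intro i
      have h := hx i.succ
      rw [← Fin.succ_castSucc] at h
      exact h
    obtain ⟨p', hp'⟩ := ih x' hstep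
    have h01 := hx 0
    have hend : x' (Fin.last n) = x (Fin.last (n + 1)) := congrArg x (Fin.succ_last n)
    have hc0 : x ((0 : Fin (n + 1)).castSucc) = x 0 := congrArg x Fin.castSucc_zero
    rcases h01 with hadj | heq
    · refine ⟨(Walk.cons (hc0 ▸ hadj) p').copy rfl hend, ?_⟩
      intro y hy
      simp only [Walk.support_copy, Walk.support_cons, List.mem_cons] at hy
      rcases hy with rfl | hy
      · exact ⟨0, rfl⟩
      · obtain ⟨i, rfl⟩ := hp' y hy
        exact ⟨i.succ, rfl⟩
    · refine ⟨p'.copy (heq.symm.trans hc0) hend, ?_⟩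
      intro y hy
      simp only [Walk.support_copy] at hy
      obtain ⟨i, rfl⟩ := hp' y hy
      exact ⟨i.succ, rfl⟩

lemma sum_union_le' [DecidableEq V] (s t : Finset V) (f : V → ℝ≥0∞) :
    ∑ u ∈ s ∪ t, f u ≤ ∑ u ∈ s, f u + ∑ u ∈ t, f u := by
  classical
  rw [← Finset.sum_union_inter]
  exact le_self_add

lemma sum_image_le' {ι : Type*} [DecidableEq V] (s : Finset ι) (x : ι → V) (f : V → ℝ≥0∞) :
    ∑ v ∈ s.image x, f v ≤ ∑ i ∈ s, f (x i) := by
  classical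
  induction s using Finset.induction with
  | empty => simp
  | @insert a s ha ih =>
    rw [Finset.image_insert, Finset.sum_insert ha]
    by_cases h : x a ∈ s.image x
    · rw [Finset.insert_eq_self.mpr h]
      exact ih.trans le_add_self
    · rw [Finset.sum_insert h]
      exact add_le_add le_rfl ih

lemma sum_rpow_le (F : Finset V) (f : V → ℝ≥0∞) {Q : ℝ} (hQ : 0 < Q) :
    (∑ u ∈ F, f u) ^ Q ≤ (F.card : ℝ≥0∞) ^ Q * ∑ u ∈ F, f u ^ Q := by
  rcases F.eq_empty_or_nonempty with rfl | hne
  · simp [ENNReal.zero_rpow_of_pos hQ]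
  obtain ⟨b, hb, hmax⟩ := Finset.exists_max_image F f hne
  calc (∑ u ∈ F, f u) ^ Q ≤ ((F.card : ℝ≥0∞) * f b) ^ Q := by
        refine ENNReal.rpow_le_rpow ?_ hQ.le
        have := Finset.sum_le_card_nsmul F f (f b) (fun x hx => hmax x hx)
        simpa [nsmul_eq_mul] using this
    _ = (F.card : ℝ≥0∞) ^ Q * f b ^ Q := ENNReal.mul_rpow_of_nonneg _ _ hQ.le
    _ ≤ (F.card : ℝ≥0∞) ^ Q * ∑ u ∈ F, f u ^ Q := by
        gcongr
        exact Finset.single_le_sum (f := fun u => f u ^ Q) (fun i _ => zero_le) hb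

end Stmt9Aux

/-- If the valence of `G` is at most `d₀`, then for `Q > 1` and `s > 0` there is
`C = C(d₀,s,Q)` with `mod_Q(A',B') ≤ C·mod_Q(A,B)` whenever `A' ⊆ N_s(A)`, `B' ⊆ N_s(B)`. -/
theorem stmt_9 (d0 : ℕ) (hd0 : 1 ≤ d0) (Q : ℝ) (hQ : 1 < Q) (s : ℝ) (hs : 0 < s) :
    ∃ C : ℝ, 0 < C ∧
      ∀ (V : Type) (G : SimpleGraph V),
        (∀ v : V, (G.neighborSet v).Finite) →
        (∀ v : V, (G.neighborSet v).ncard ≤ d0) →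
        ∀ A B A' B' : Set V, A' ⊆ graphNbhd G s A → B' ⊆ graphNbhd G s B →
          gmodQ G Q A' B' ≤ ENNReal.ofReal C * gmodQ G Q A B := by
  classical
  set k : ℕ := ⌈s⌉₊ with hk
  set N : ℕ := (d0 + 1) ^ k with hN
  have hNpos : 0 < N := pow_pos (Nat.succ_pos d0) k
  have h3Npos : (0 : ℝ) < ((3 * N : ℕ) : ℝ) := by positivity
  have hQ0 : (0 : ℝ) < Q := lt_trans one_pos hQ
  refine ⟨((3 * N : ℕ) : ℝ) ^ (Q + 1), Real.rpow_pos_of_pos h3Npos _, ?_⟩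
  intro V G hfin hd A B A' B' hA' hB'
  have hCne : ENNReal.ofReal (((3 * N : ℕ) : ℝ) ^ (Q + 1)) ≠ 0 :=
    (ENNReal.ofReal_pos.mpr (Real.rpow_pos_of_pos h3Npos _)).ne'
  -- finiteness of balls
  choose F hFsub hFcard using fun v => Stmt9Aux.gball_bound (G := G) hfin hd k v
  have hbfin : ∀ v, (Stmt9Aux.gball G k v).Finite :=
    fun v => Set.Finite.subset (F v).finite_toSet (hFsub v)
  set Bf : V → Finset V := fun v => (hbfin v).toFinset with hBf
  have hBmem : ∀ u v, u ∈ Bf v ↔ u ∈ Stmt9Aux.gball G k v := fun u v => (hbfin v).mem_toFinset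
  have hBcard : ∀ v, (Bf v).card ≤ N := by
    intro v
    refine le_trans (Finset.card_le_card ?_) (hFcard v)
    intro u hu
    exact hFsub v ((hBmem u v).mp hu)
  have key : ∀ w : V → ℝ≥0∞, GraphAdmissible G A B w →
      gmodQ G Q A' B' ≤ ENNReal.ofReal (((3 * N : ℕ) : ℝ) ^ (Q + 1)) * ∑' v, w v ^ Q := by
    intro w hw
    set w' : V → ℝ≥0∞ := fun v => ∑ u ∈ Bf v, w u with hw'
    set w'' : V → ℝ≥0∞ := fun v => 3 * w' v with hw''
    have hle : ∀ v, w v ≤ w' v := fun v =>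
      Finset.single_le_sum (fun u _ => zero_le) ((hBmem v v).mpr (Stmt9Aux.self_mem_gball k v))
    have adm : GraphAdmissible G A' B' w'' := by
      intro n x hx h0 hlast
      obtain ⟨a, haA, hra, hda⟩ := hA' h0
      obtain ⟨b, hbB, hrb, hdb⟩ := hB' hlast
      have hdak : G.dist (x 0) a ≤ k := by
        have h1 : (G.dist (x 0) a : ℝ) < (k : ℝ) := lt_of_lt_of_le hda (Nat.le_ceil s)
        exact_mod_cast h1.le
      have hdbk : G.dist (x (Fin.last n)) b ≤ k := by
        have h1 : (G.dist (x (Fin.last n)) b : ℝ) < (k : ℝ) := lt_of_lt_of_le hdb (Nat.le_ceil s)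
        exact_mod_cast h1.le
      obtain ⟨p₀, hp₀⟩ := hra.exists_walk_length_eq_dist
      set p := p₀.reverse with hp
      have hplen : p.length ≤ k := by
        rw [hp, SimpleGraph.Walk.length_reverse, hp₀]; exact hdak
      have hpsup : ∀ y ∈ p.support, y ∈ Stmt9Aux.gball G k (x 0) := fun y hy =>
        ⟨p.dropUntil y hy, le_trans (SimpleGraph.Walk.length_dropUntil_le p hy) hplen⟩
      obtain ⟨q, hq₀⟩ := hrb.exists_walk_length_eq_dist
      have hqlen : q.length ≤ k := by rw [hq₀]; exact hdbk
      have hqsup : ∀ y ∈ q.support, y ∈ Stmt9Aux.gball G k (x (Fin.last n)) := fun y hy =>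
        ⟨(q.takeUntil y hy).reverse, by
          rw [SimpleGraph.Walk.length_reverse]
          exact le_trans (SimpleGraph.Walk.length_takeUntil_le q hy) hqlen⟩
      obtain ⟨m, hm⟩ := Stmt9Aux.chain_to_walk n x hx
      set W := p.append (m.append q) with hW
      set P := W.bypass with hP
      have hPchain : P.support.Chain' (fun x y => G.Adj x y ∨ x = y) :=
        List.IsChain.imp (fun a b h => Or.inl h) P.isChain_adj_support
      have hPne : P.support ≠ [] := P.support_ne_nil
      have h1 : 1 ≤ (P.support.map w).sum := by
        refine Stmt9Aux.one_le_sum_list hw P.support hPne hPchain ?_ ?_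
        · have : P.support.head hPne = a := P.head_support
          rw [this]; exact haA
        · have : P.support.getLast hPne = b := P.getLast_support
          rw [this]; exact hbB
      have hnodup : P.support.Nodup := (W.bypass_isPath).support_nodup
      have h2 : (P.support.map w).sum = ∑ u ∈ P.support.toFinset, w u :=
        (List.sum_toFinset w hnodup).symm
      have hsub : P.support.toFinset ⊆
          (Bf (x 0) ∪ Finset.image x Finset.univ) ∪ Bf (x (Fin.last n)) := by
        intro y hy
        have hy' : y ∈ W.support := SimpleGraph.Walk.support_bypass_subset W (List.mem_toFinset.mp hy)
        rw [hW] at hy'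
        rcases (SimpleGraph.Walk.mem_support_append_iff _ _).mp hy' with h | h
        · exact Finset.mem_union_left _ (Finset.mem_union_left _ ((hBmem _ _).mpr (hpsup y h)))
        · rcases (SimpleGraph.Walk.mem_support_append_iff _ _).mp h with h | h
          · obtain ⟨i, rfl⟩ := hm y h
            exact Finset.mem_union_left _
              (Finset.mem_union_right _ (Finset.mem_image_of_mem x (Finset.mem_univ i)))
          · exact Finset.mem_union_right _ ((hBmem _ _).mpr (hqsup y h))
      have h3 : ∑ u ∈ P.support.toFinset, w u ≤
          w' (x 0) + (∑ i, w (x i)) + w' (x (Fin.last n)) := by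
        refine le_trans (Finset.sum_le_sum_of_subset hsub) ?_
        refine le_trans (Stmt9Aux.sum_union_le' _ _ _) ?_
        refine add_le_add ?_ le_rfl
        refine le_trans (Stmt9Aux.sum_union_le' _ _ _) ?_
        exact add_le_add le_rfl (Stmt9Aux.sum_image_le' _ _ _)
      have h4 : w' (x 0) + (∑ i, w (x i)) + w' (x (Fin.last n)) ≤ ∑ i, w'' (x i) := by
        have e1 : w' (x 0) ≤ ∑ i, w' (x i) :=
          Finset.single_le_sum (f := fun i : Fin (n+1) => w' (x i)) (fun i _ => zero_le)
            (Finset.mem_univ 0)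
        have e2 : w' (x (Fin.last n)) ≤ ∑ i, w' (x i) :=
          Finset.single_le_sum (f := fun i : Fin (n+1) => w' (x i)) (fun i _ => zero_le)
            (Finset.mem_univ _)
        have e3 : (∑ i, w (x i)) ≤ ∑ i, w' (x i) := Finset.sum_le_sum (fun i _ => hle (x i))
        have e4 : ∑ i, w'' (x i) = (∑ i, w' (x i)) + (∑ i, w' (x i)) + (∑ i, w' (x i)) := by
          simp only [hw'']
          rw [← Finset.mul_sum]
          ring
        rw [e4]
        exact add_le_add (add_le_add e1 e3) e2
      calc (1 : ℝ≥0∞) ≤ (P.support.map w).sum := h1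
        _ = ∑ u ∈ P.support.toFinset, w u := h2
        _ ≤ w' (x 0) + (∑ i, w (x i)) + w' (x (Fin.last n)) := h3
        _ ≤ ∑ i, w'' (x i) := h4
    have h3N0 : (3 * (N : ℝ≥0∞)) ≠ 0 := by
      simp [hNpos.ne']
    have h3Ntop : (3 * (N : ℝ≥0∞)) ≠ ⊤ :=
      ENNReal.mul_ne_top (by simp) (ENNReal.natCast_ne_top N)
    have cost : ∑' v, w'' v ^ Q ≤
        ENNReal.ofReal (((3 * N : ℕ) : ℝ) ^ (Q + 1)) * ∑' v, w v ^ Q := by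
      have step1 : ∀ v, w'' v ^ Q ≤ (3 : ℝ≥0∞) ^ Q * ((N : ℝ≥0∞) ^ Q * ∑ u ∈ Bf v, w u ^ Q) := by
        intro v
        have e1 : w'' v ^ Q = (3 : ℝ≥0∞) ^ Q * w' v ^ Q := ENNReal.mul_rpow_of_nonneg _ _ hQ0.le
        rw [e1]
        refine mul_le_mul_right ?_ _
        refine le_trans (Stmt9Aux.sum_rpow_le (Bf v) w hQ0) ?_
        refine mul_le_mul_left ?_ _
        exact ENNReal.rpow_le_rpow (by exact_mod_cast hBcard v) hQ0.le
      have step2 : ∑' v, ∑ u ∈ Bf v, w u ^ Q ≤ (N : ℝ≥0∞) * ∑' u, w u ^ Q := by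
        set g : V → ℝ≥0∞ := fun u => w u ^ Q with hg
        have e1 : ∀ v, ∑ u ∈ Bf v, g u = ∑' u, if u ∈ Stmt9Aux.gball G k v then g u else 0 := by
          intro v
          rw [tsum_eq_sum (s := Bf v) (fun u hu => if_neg (fun hmem => hu ((hBmem u v).mpr hmem)))]
          exact (Finset.sum_congr rfl (fun u hu => (if_pos ((hBmem u v).mp hu)).symm))
        have e2 : ∀ u, ∑ v ∈ Bf u, g u = ∑' v, if v ∈ Stmt9Aux.gball G k u then g u else 0 := by
          intro u
          rw [tsum_eq_sum (s := Bf u) (fun v hv => if_neg (fun hmem => hv ((hBmem v u).mpr hmem)))]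
          exact (Finset.sum_congr rfl (fun v hv => (if_pos ((hBmem v u).mp hv)).symm))
        calc ∑' v, ∑ u ∈ Bf v, g u
            = ∑' v, ∑' u, if u ∈ Stmt9Aux.gball G k v then g u else 0 := tsum_congr e1
          _ = ∑' u, ∑' v, if u ∈ Stmt9Aux.gball G k v then g u else 0 := ENNReal.tsum_comm
          _ = ∑' u, ∑' v, if v ∈ Stmt9Aux.gball G k u then g u else 0 := by
              refine tsum_congr fun u => tsum_congr fun v => ?_
              simp only [Stmt9Aux.mem_gball_comm]
          _ = ∑' u, ∑ v ∈ Bf u, g u := tsum_congr (fun u => (e2 u).symm)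
          _ = ∑' u, ((Bf u).card : ℝ≥0∞) * g u := by
              refine tsum_congr fun u => ?_
              rw [Finset.sum_const, nsmul_eq_mul]
          _ ≤ ∑' u, (N : ℝ≥0∞) * g u := by
              refine ENNReal.tsum_le_tsum fun u => ?_
              exact mul_le_mul_left (by exact_mod_cast hBcard u) _
          _ = (N : ℝ≥0∞) * ∑' u, g u := ENNReal.tsum_mul_left
      calc ∑' v, w'' v ^ Q
          ≤ ∑' v, (3 : ℝ≥0∞) ^ Q * ((N : ℝ≥0∞) ^ Q * ∑ u ∈ Bf v, w u ^ Q) :=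
            ENNReal.tsum_le_tsum step1
        _ = (3 : ℝ≥0∞) ^ Q * ((N : ℝ≥0∞) ^ Q * ∑' v, ∑ u ∈ Bf v, w u ^ Q) := by
            rw [ENNReal.tsum_mul_left, ENNReal.tsum_mul_left]
        _ ≤ (3 : ℝ≥0∞) ^ Q * ((N : ℝ≥0∞) ^ Q * ((N : ℝ≥0∞) * ∑' u, w u ^ Q)) := by
            gcongr
        _ = (3 : ℝ≥0∞) ^ Q * (N : ℝ≥0∞) ^ Q * (N : ℝ≥0∞) * (∑' u, w u ^ Q) := by ring
        _ ≤ (3 : ℝ≥0∞) ^ Q * (N : ℝ≥0∞) ^ Q * (3 * (N : ℝ≥0∞)) * (∑' u, w u ^ Q) := by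
            gcongr
            exact le_mul_of_one_le_left (zero_le) (by norm_num)
        _ = (3 * (N : ℝ≥0∞)) ^ Q * (3 * (N : ℝ≥0∞)) * (∑' u, w u ^ Q) := by
            rw [ENNReal.mul_rpow_of_nonneg _ _ hQ0.le]
        _ = (3 * (N : ℝ≥0∞)) ^ (Q + 1) * (∑' u, w u ^ Q) := by
            rw [ENNReal.rpow_add _ _ h3N0 h3Ntop, ENNReal.rpow_one]
        _ = ENNReal.ofReal (((3 * N : ℕ) : ℝ) ^ (Q + 1)) * ∑' v, w v ^ Q := by
            rw [← ENNReal.ofReal_rpow_of_pos h3Npos, ENNReal.ofReal_natCast]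
            norm_num
    calc gmodQ G Q A' B' ≤ ∑' v, w'' v ^ Q := iInf₂_le w'' adm
      _ ≤ ENNReal.ofReal (((3 * N : ℕ) : ℝ) ^ (Q + 1)) * ∑' v, w v ^ Q := cost
  -- assemble the infimum
  conv_rhs => rw [gmodQ]
  rw [ENNReal.mul_iInf (fun h => absurd h (by simp [ENNReal.ofReal_ne_top]))]
  refine le_iInf fun w => ?_
  by_cases hadm : GraphAdmissible G A B w
  · rw [iInf_pos hadm]
    exact key w hadm
  · rw [iInf_neg hadm, ENNReal.mul_top hCne]
    exact le_top
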